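/- Let F_n be the free monoid on n ≥ 2 generators G. There exists a macro set M ⊆ F_n such that: (i) |M ∩ S_r| / |S_r| → 0 as r → ∞; (ii) there exist constants K, c > 0 (depending only on n) with B_G(r) ⊆ B_{G'}(⌈K(log r)^2⌉) for all sufficiently large r; and consequently (iii) f_{G'}(s) ≥ exp(c√s) for all sufficiently large s, so in particular f_{G'}(s)/s → ∞ as s → ∞. -/

import Mathlib

open scoped ENNReal

/-- The single-letter generating set `G` of the free monoid `F_n` on `n` letters,
realized as lists over `Fin n`. -/
def letters (n : ℕ) : Set (List (Fin n)) := {w | ∃ i : Fin n, w = [i]}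

/-- The length of `w ∈ F_n` with respect to a generating set `S`: the minimum number `k`
such that `w` is a concatenation of `k` elements of `S`; `⊤` if `w` is not representable. -/
noncomputable def flen {n : ℕ} (S : Set (List (Fin n))) (w : List (Fin n)) : ℕ∞ :=
  sInf {k : ℕ∞ | ∃ L : List (List (Fin n)),
    (∀ x ∈ L, x ∈ S) ∧ L.flatten = w ∧ (L.length : ℕ∞) = k}

/-- The expansion function `f_{G'}(s) = sup { r ∈ ℕ : B_G(r) ⊆ B_{G'}(s) }` of the free
monoid, valued in `ℝ≥0∞` (so `⊤` means the inclusion holds for every radius). -/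
noncomputable def fexpansion {n : ℕ} (S : Set (List (Fin n))) (s : ℕ) : ℝ≥0∞ :=
  sSup {x : ℝ≥0∞ | ∃ r : ℕ, x = (r : ℝ≥0∞) ∧
    ∀ w : List (Fin n), w.length ≤ r → flen S w ≤ (s : ℕ∞)}



namespace FreeExpAux

/-- Base-`n` encoding of a word. -/
def enc {n : ℕ} : List (Fin n) → ℕ
  | [] => 0
  | a :: t => a.val + n * enc t

lemma enc_lt {n : ℕ} (hn : 1 ≤ n) : ∀ w : List (Fin n), enc w < n ^ w.length
  | [] => by simp [enc]
  | a :: t => by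
      have ht := enc_lt hn t
      have ha := a.isLt
      have h1 : a.val + n * enc t + 1 ≤ n * (enc t + 1) := by
        have : a.val + 1 ≤ n := ha
        nlinarith
      have h2 : n * (enc t + 1) ≤ n * n ^ t.length := Nat.mul_le_mul_left n ht
      simp only [enc, List.length_cons, pow_succ]
      calc a.val + n * enc t < n * (enc t + 1) := by omega
        _ ≤ n * n ^ t.length := h2
        _ = n ^ t.length * n := mul_comm _ _

lemma enc_injOn {n : ℕ} : ∀ w v : List (Fin n), w.length = v.length → enc w = enc v → w = v
  | [], [], _, _ => rfl
  | a :: t, b :: s, hl, he => by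
      have ha := a.isLt
      have hb := b.isLt
      simp only [enc] at he
      have hab : a.val = b.val := by
        have h1 : (a.val + n * enc t) % n = a.val % n := Nat.add_mul_mod_self_left a.val n (enc t)
        have h2 : (b.val + n * enc s) % n = b.val % n := Nat.add_mul_mod_self_left b.val n (enc s)
        rw [he] at h1
        rw [h1, Nat.mod_eq_of_lt hb, Nat.mod_eq_of_lt ha] at h2
        omega
      have hts : enc t = enc s := by
        have hn : 0 < n := lt_of_le_of_lt (Nat.zero_le _) ha
        have : n * enc t = n * enc s := by omega
        exact Nat.eq_of_mul_eq_mul_left hn this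
      have : t = s := enc_injOn t s (by simpa using hl) hts
      simp [Fin.ext_iff, hab, this]
  | [], _ :: _, hl, _ => by simp at hl
  | _ :: _, [], hl, _ => by simp at hl

/-- the sparsity exponent. -/
def fm (n m : ℕ) : ℕ := Nat.log n (Nat.log 2 m)

/-- The macro set. -/
def Mset (n : ℕ) : Set (List (Fin n)) :=
  {w | ∃ k, fm n w.length ≤ k ∧ k ≤ w.length ∧ enc (w.take k) = w.length % n ^ k}

/-- Finset of lists of length `j`. -/
def FL (n : ℕ) : ℕ → Finset (List (Fin n))
  | 0 => {[]}
  | j + 1 => (Finset.univ ×ˢ FL n j).image fun p => p.1 :: p.2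

lemma mem_FL {n : ℕ} : ∀ (j : ℕ) (w : List (Fin n)), w ∈ FL n j ↔ w.length = j
  | 0, w => by simp [FL, List.length_eq_zero_iff]
  | j + 1, w => by
      cases w with
      | nil => simp [FL]
      | cons a t =>
          constructor
          · intro hw
            obtain ⟨p, hp, h⟩ := Finset.mem_image.mp hw
            obtain ⟨x, y⟩ := p
            obtain ⟨rfl, rfl⟩ : x = a ∧ y = t := by
              simpa only [List.cons.injEq] using h
            have hmem : y ∈ FL n j := (Finset.mem_product.mp hp).2
            have : y.length = j := (mem_FL j y).mp hmem
            simp [this]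
          · intro h
            refine Finset.mem_image.mpr ⟨(a, t), Finset.mem_product.mpr ⟨Finset.mem_univ a, (mem_FL j t).mpr ?_⟩, rfl⟩
            simpa using h

lemma card_FL {n : ℕ} : ∀ j : ℕ, (FL n j).card = n ^ j
  | 0 => by simp [FL]
  | j + 1 => by
      rw [show FL n (j+1) = (Finset.univ ×ˢ FL n j).image (fun p => p.1 :: p.2) from rfl,
        Finset.card_image_of_injective _ (fun p q h => by
          simp only [List.cons.injEq] at h
          exact Prod.ext h.1 h.2),
        Finset.card_product, card_FL j]
      simp [Finset.card_univ, pow_succ]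
      ring

end FreeExpAux

namespace FreeExpAux
open Finset

lemma geom_le {n : ℕ} (hn : 2 ≤ n) : ∀ t : ℕ, ∑ j ∈ Finset.range (t + 1), n ^ j ≤ 2 * n ^ t
  | 0 => by simp
  | t + 1 => by
      rw [Finset.sum_range_succ]
      have h1 := geom_le hn t
      have h2 : 2 * n ^ t ≤ n * n ^ t := Nat.mul_le_mul_right _ hn
      have : n * n ^ t + n ^ (t+1) = 2 * n ^ (t+1) := by rw [pow_succ]; ring
      omega

lemma sum_Icc_pow {n a m : ℕ} (h : a ≤ m) :
    ∑ k ∈ Finset.Icc a m, n ^ (m - k) = ∑ j ∈ Finset.range (m - a + 1), n ^ j := by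
  refine Finset.sum_nbij' (fun k => m - k) (fun j => m - j) ?_ ?_ ?_ ?_ ?_ <;>
    intros x hx <;> simp only [Finset.mem_Icc, Finset.mem_range] at * <;> omega

lemma card_bound {n : ℕ} (hn : 2 ≤ n) (m : ℕ) :
    ((Mset n) ∩ {w : List (Fin n) | w.length = m}).ncard ≤ 2 * n ^ (m - fm n m) := by
  classical
  set T : Finset (List (Fin n)) :=
    (Finset.Icc (fm n m) m).biUnion
      (fun k => (FL n m).filter (fun w => enc (w.take k) = m % n ^ k)) with hT
  have hsub : (Mset n) ∩ {w : List (Fin n) | w.length = m} ⊆ ↑T := by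
    rintro w ⟨hwM, hwl⟩
    obtain ⟨k, hk1, hk2, hk3⟩ := hwM
    simp only [Set.mem_setOf_eq] at hwl
    refine Finset.mem_coe.mpr (Finset.mem_biUnion.mpr ⟨k, Finset.mem_Icc.mpr ⟨?_, ?_⟩, ?_⟩)
    · rwa [hwl] at hk1
    · rwa [hwl] at hk2
    · exact Finset.mem_filter.mpr ⟨(mem_FL m w).mpr hwl, by rwa [hwl] at hk3⟩
  have h1 : ((Mset n) ∩ {w : List (Fin n) | w.length = m}).ncard ≤ T.card := by
    rw [← Set.ncard_coe_finset]
    exact Set.ncard_le_ncard hsub T.finite_toSet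
  have h2 : T.card ≤ ∑ k ∈ Finset.Icc (fm n m) m,
      ((FL n m).filter (fun w => enc (w.take k) = m % n ^ k)).card :=
    Finset.card_biUnion_le
  have h3 : ∀ k ∈ Finset.Icc (fm n m) m,
      ((FL n m).filter (fun w => enc (w.take k) = m % n ^ k)).card ≤ n ^ (m - k) := by
    intro k hk
    obtain ⟨hk1, hk2⟩ := Finset.mem_Icc.mp hk
    have hcard : ((FL n m).filter (fun w => enc (w.take k) = m % n ^ k)).card ≤
        (FL n (m - k)).card := Finset.card_le_card_of_injOn (List.drop k)
      (fun w hw => by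
        have hlen : w.length = m := (mem_FL m w).mp (Finset.mem_filter.mp hw).1
        exact (mem_FL (m - k) _).mpr (by simp [hlen]))
      (fun w1 hw1 w2 hw2 hdrop => by
        have hw1' := Finset.mem_filter.mp (Finset.mem_coe.mp hw1)
        have hw2' := Finset.mem_filter.mp (Finset.mem_coe.mp hw2)
        have hl1 : w1.length = m := (mem_FL m w1).mp hw1'.1
        have hl2 : w2.length = m := (mem_FL m w2).mp hw2'.1
        have htk : w1.take k = w2.take k := by
          apply enc_injOn
          · simp [hl1, hl2]
          · rw [hw1'.2, hw2'.2]
        calc w1 = w1.take k ++ w1.drop k := (List.take_append_drop k w1).symm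
          _ = w2.take k ++ w2.drop k := by rw [htk, hdrop]
          _ = w2 := List.take_append_drop k w2)
    rwa [card_FL (m - k)] at hcard
  have h4 : ∑ k ∈ Finset.Icc (fm n m) m,
      ((FL n m).filter (fun w => enc (w.take k) = m % n ^ k)).card ≤
      ∑ k ∈ Finset.Icc (fm n m) m, n ^ (m - k) := Finset.sum_le_sum h3
  have hfm : fm n m ≤ m := le_trans (Nat.log_le_self n _) (Nat.log_le_self 2 m)
  · have h5 : ∑ k ∈ Finset.Icc (fm n m) m, n ^ (m - k) ≤ 2 * n ^ (m - fm n m) := by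
      rw [sum_Icc_pow hfm]
      have := geom_le hn (m - fm n m)
      exact this
    have hp : 0 < n ^ (m - fm n m) := pow_pos (by omega) _
    omega

end FreeExpAux

namespace FreeExpAux
open Filter

lemma fm_tendsto {n : ℕ} (hn : 2 ≤ n) : Tendsto (fm n) atTop atTop := by
  rw [Filter.tendsto_atTop_atTop]
  intro b
  refine ⟨2 ^ n ^ b, fun m hm => ?_⟩
  have hm0 : m ≠ 0 := by
    have : 0 < 2 ^ n ^ b := pow_pos (by norm_num) _
    omega
  have h1 : n ^ b ≤ Nat.log 2 m := (Nat.le_log_iff_pow_le (by norm_num) hm0).mpr hm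
  have h2 : Nat.log 2 m ≠ 0 := by
    have : 0 < n ^ b := pow_pos (by omega) _
    omega
  exact (Nat.le_log_iff_pow_le (by omega) h2).mpr h1

lemma density_tendsto {n : ℕ} (hn : 2 ≤ n) :
    Tendsto (fun r : ℕ => (((Mset n) ∩ {w : List (Fin n) | w.length = r}).ncard : ℝ) / (n : ℝ) ^ r)
      atTop (nhds 0) := by
  have hn1 : (1 : ℝ) < n := by exact_mod_cast hn
  have hnpos : (0 : ℝ) < n := by linarith
  apply squeeze_zero (g := fun r => 2 / (n : ℝ) ^ (fm n r))
  · intro r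
    positivity
  · intro r
    have hfm : fm n r ≤ r := le_trans (Nat.log_le_self n _) (Nat.log_le_self 2 r)
    have hb := card_bound hn r
    have hbR : (((Mset n) ∩ {w : List (Fin n) | w.length = r}).ncard : ℝ) ≤
        2 * (n : ℝ) ^ (r - fm n r) := by exact_mod_cast hb
    rw [div_le_div_iff₀ (by positivity) (by positivity)]
    calc (((Mset n) ∩ {w : List (Fin n) | w.length = r}).ncard : ℝ) * (n : ℝ) ^ (fm n r)
        ≤ (2 * (n : ℝ) ^ (r - fm n r)) * (n : ℝ) ^ (fm n r) := by
          apply mul_le_mul_of_nonneg_right hbR (by positivity)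
      _ = 2 * (n : ℝ) ^ r := by
          rw [mul_assoc, ← pow_add]
          congr 2
          omega
  · have h1 : Tendsto (fun k : ℕ => (2 : ℝ) / (n : ℝ) ^ k) atTop (nhds 0) :=
      Tendsto.div_atTop tendsto_const_nhds (tendsto_pow_atTop_atTop_of_one_lt hn1)
    exact h1.comp (fm_tendsto hn)

end FreeExpAux

namespace FreeExpAux

lemma flen_le_of_decomp {n : ℕ} {S : Set (List (Fin n))} {w : List (Fin n)}
    (L : List (List (Fin n))) (h1 : ∀ x ∈ L, x ∈ S) (h2 : L.flatten = w) :
    flen S w ≤ (L.length : ℕ∞) :=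
  sInf_le ⟨L, h1, h2, rfl⟩

lemma flatten_map_singleton {n : ℕ} (w : List (Fin n)) :
    (w.map fun a => ([a] : List (Fin n))).flatten = w := by
  induction w with
  | nil => simp
  | cons a t ih => simp [ih]

lemma flen_le_len {n : ℕ} (M : Set (List (Fin n))) (w : List (Fin n)) :
    flen (letters n ∪ M) w ≤ (w.length : ℕ∞) := by
  have := flen_le_of_decomp (S := letters n ∪ M) (w := w) (w.map fun a => [a])
    (fun x hx => by
      obtain ⟨a, _, rfl⟩ := List.mem_map.mp hx
      exact Or.inl ⟨a, rfl⟩)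
    (flatten_map_singleton w)
  simpa using this

lemma cover {n : ℕ} (hn : 2 ≤ n) {r : ℕ} (hr : 2 ≤ r) (w : List (Fin n)) (hw : w.length ≤ r) :
    flen (letters n ∪ Mset n) w ≤ ((2 * Nat.log 2 r : ℕ) : ℕ∞) := by
  set k := fm n r with hk
  have hlog1 : 1 ≤ Nat.log 2 r := Nat.log_pos (by norm_num) hr
  have hnk : n ^ k ≤ Nat.log 2 r := Nat.pow_log_le_self n (by omega)
  have hkpow : k < n ^ k := Nat.lt_pow_self (by omega)
  have hnkpos : 0 < n ^ k := pow_pos (by omega) _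
  set ℓ := w.length with hℓ
  by_cases hsmall : ℓ < 2 * n ^ k
  · -- all single letters
    refine le_trans (flen_le_len _ w) ?_
    have : ℓ ≤ 2 * Nat.log 2 r := by omega
    exact_mod_cast Nat.cast_le.mpr this
  · push_neg at hsmall
    have hkℓ : k ≤ ℓ := by omega
    set c := enc (w.take k) with hc
    have hclt : c < n ^ k := by
      have := enc_lt (by omega) (w.take k)
      rwa [List.length_take, min_eq_left hkℓ] at this
    have hcℓ : c ≤ ℓ := by omega
    obtain ⟨q, x, hxlt, hdm⟩ : ∃ q x, x < n ^ k ∧ n ^ k * q + x = ℓ - c :=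
      ⟨(ℓ - c) / n ^ k, (ℓ - c) % n ^ k, Nat.mod_lt _ hnkpos, Nat.div_add_mod _ _⟩
    set m := c + n ^ k * q with hm
    have hmℓ : m ≤ ℓ := by omega
    have hℓm : ℓ - m = x := by omega
    have hmmod : m % n ^ k = c := by
      rw [hm, Nat.add_mul_mod_self_left, Nat.mod_eq_of_lt hclt]
    have hkm : k ≤ m := by omega
    -- the macro
    have hmem : w.take m ∈ Mset n := by
      have hlen : (w.take m).length = m := by
        rw [List.length_take, min_eq_left hmℓ]
      refine ⟨k, ?_, ?_, ?_⟩
      · rw [hlen]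
        exact le_trans (Nat.log_mono_right (Nat.log_mono_right (le_trans hmℓ hw))) le_rfl
      · omega
      · rw [hlen, List.take_take, min_eq_left hkm, hmmod]
    -- decomposition
    set L : List (List (Fin n)) := (w.take m) :: ((w.drop m).map fun a => [a]) with hL
    have hLmem : ∀ y ∈ L, y ∈ letters n ∪ Mset n := by
      intro y hy
      rcases List.mem_cons.mp hy with rfl | hy'
      · exact Or.inr hmem
      · obtain ⟨a, _, rfl⟩ := List.mem_map.mp hy'
        exact Or.inl ⟨a, rfl⟩
    have hLflat : L.flatten = w := by
      simp only [hL, List.flatten_cons, flatten_map_singleton]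
      exact List.take_append_drop m w
    have hLlen : L.length ≤ 2 * Nat.log 2 r := by
      simp only [hL, List.length_cons, List.length_map, List.length_drop]
      omega
    have hfin : flen (letters n ∪ Mset n) w ≤ (L.length : ℕ∞) :=
      flen_le_of_decomp L hLmem hLflat
    exact le_trans hfin (by exact_mod_cast Nat.cast_le.mpr hLlen)

end FreeExpAux

namespace FreeExpAux
open Filter

/-- Part (ii) with K = 9, r₀ = 2. -/
lemma part2 {n : ℕ} (hn : 2 ≤ n) {r : ℕ} (hr : 2 ≤ r) (w : List (Fin n)) (hw : w.length ≤ r) :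
    flen (letters n ∪ Mset n) w ≤ ((⌈(9 : ℝ) * (Real.log r) ^ 2⌉₊ : ℕ) : ℕ∞) := by
  refine le_trans (cover hn hr w hw) ?_
  have hreal : (2 * Nat.log 2 r : ℝ) ≤ 9 * (Real.log r) ^ 2 := by
    have hpow : (2 : ℝ) ^ (Nat.log 2 r) ≤ (r : ℝ) := by
      exact_mod_cast Nat.pow_log_le_self 2 (by omega : r ≠ 0)
    have hlogpow : (Nat.log 2 r : ℝ) * Real.log 2 ≤ Real.log r := by
      have := Real.log_le_log (by positivity) hpow
      rwa [Real.log_pow] at this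
    have hl2 : (0.6931471803 : ℝ) < Real.log 2 := Real.log_two_gt_d9
    have hlr : Real.log 2 ≤ Real.log r := Real.log_le_log (by norm_num) (by exact_mod_cast hr)
    have hL : (Nat.log 2 r : ℝ) ≤ 2 * Real.log r := by
      have hnn : (0:ℝ) ≤ (Nat.log 2 r : ℝ) := Nat.cast_nonneg _
      nlinarith
    nlinarith [Real.log_nonneg (by exact_mod_cast (by omega : 1 ≤ r) : (1:ℝ) ≤ (r:ℝ))]
  have := Nat.le_ceil ((9 : ℝ) * (Real.log r) ^ 2)
  have hnat : 2 * Nat.log 2 r ≤ ⌈(9 : ℝ) * (Real.log r) ^ 2⌉₊ := by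
    exact_mod_cast le_trans hreal this
  exact_mod_cast Nat.cast_le.mpr hnat

lemma fexp_ge {n : ℕ} {S : Set (List (Fin n))} {s r : ℕ}
    (h : ∀ w : List (Fin n), w.length ≤ r → flen S w ≤ (s : ℕ∞)) :
    (r : ℝ≥0∞) ≤ fexpansion S s :=
  le_sSup ⟨r, rfl, h⟩

/-- key lemma: for s ≥ 1296, fexpansion ≥ ⌈exp(√s/12)⌉. -/
lemma key {n : ℕ} (hn : 2 ≤ n) {s : ℕ} (hs : 1296 ≤ s) :
    ((⌈Real.exp (Real.sqrt s / 12)⌉₊ : ℕ) : ℝ≥0∞) ≤ fexpansion (letters n ∪ Mset n) s := by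
  set x := Real.exp (Real.sqrt s / 12) with hxdef
  have hs36 : (36 : ℝ) ≤ Real.sqrt s := by
    have h1 : Real.sqrt 1296 ≤ Real.sqrt s := Real.sqrt_le_sqrt (by exact_mod_cast hs)
    have h2 : Real.sqrt (1296 : ℝ) = 36 := by
      rw [show (1296 : ℝ) = 36 ^ 2 by norm_num, Real.sqrt_sq (by norm_num)]
    linarith
  have hx1 : 1 < x := Real.one_lt_exp_iff.mpr (by positivity)
  set r := ⌈x⌉₊ with hrdef
  have hr2 : 2 ≤ r := by
    have : 1 < r := Nat.lt_ceil.mpr (by exact_mod_cast hx1)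
    omega
  have hxr : x ≤ (r : ℝ) := Nat.le_ceil x
  have hrx : (r : ℝ) ≤ 2 * x := by
    have := Nat.ceil_lt_add_one (le_of_lt (lt_trans one_pos hx1))
    linarith
  have hlogr : Real.log r ≤ Real.sqrt s / 9 := by
    have h1 : Real.log r ≤ Real.log (2 * x) :=
      Real.log_le_log (by positivity) hrx
    rw [Real.log_mul (by norm_num) (by positivity), hxdef, Real.log_exp] at h1
    have hl2 : Real.log 2 < 0.6931471808 := Real.log_two_lt_d9
    have h36 : (1 : ℝ) ≤ Real.sqrt s / 36 := by linarith
    calc Real.log r ≤ Real.log 2 + Real.sqrt s / 12 := h1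
      _ ≤ Real.sqrt s / 36 + Real.sqrt s / 12 := by linarith
      _ = Real.sqrt s / 9 := by ring
  have hceil : ⌈(9 : ℝ) * (Real.log r) ^ 2⌉₊ ≤ s := by
    rw [Nat.ceil_le]
    have hlognn : 0 ≤ Real.log r := Real.log_nonneg (by exact_mod_cast hr2.trans' (by norm_num))
    have hsq : (Real.log r) ^ 2 ≤ (Real.sqrt s / 9) ^ 2 := by
      apply pow_le_pow_left₀ hlognn hlogr
    have hss : Real.sqrt s ^ 2 = (s : ℝ) := Real.sq_sqrt (by positivity)
    nlinarith [hsq, hss]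
  have hflen : ∀ w : List (Fin n), w.length ≤ r → flen (letters n ∪ Mset n) w ≤ (s : ℕ∞) := by
    intro w hw
    refine le_trans (part2 hn hr2 w hw) ?_
    exact_mod_cast Nat.cast_le.mpr hceil
  exact fexp_ge hflen

end FreeExpAux

namespace FreeExpAux
open Filter

lemma part3 {n : ℕ} (hn : 2 ≤ n) {s : ℕ} (hs : 1296 ≤ s) :
    ENNReal.ofReal (Real.exp ((1/12 : ℝ) * Real.sqrt s)) ≤
      fexpansion (letters n ∪ Mset n) s := by
  have h0 : (1/12 : ℝ) * Real.sqrt s = Real.sqrt s / 12 := by ring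
  rw [h0]
  refine le_trans ?_ (key hn hs)
  rw [← ENNReal.ofReal_natCast]
  exact ENNReal.ofReal_le_ofReal (Nat.le_ceil _)

lemma exp_cube (t : ℝ) (ht : 0 ≤ t) : (t / 3) ^ 3 ≤ Real.exp t := by
  have h1 : t / 3 + 1 ≤ Real.exp (t / 3) := Real.add_one_le_exp _
  have h2 : (t / 3) ^ 3 ≤ (Real.exp (t / 3)) ^ 3 := by
    apply pow_le_pow_left₀ (by positivity) (by linarith)
  have h3 : (Real.exp (t / 3)) ^ 3 = Real.exp t := by
    rw [← Real.exp_nat_mul]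
    congr 1
    push_cast
    ring
  linarith [h2, h3.le, h3.ge]

lemma part4 {n : ℕ} (hn : 2 ≤ n) :
    Tendsto (fun s : ℕ => fexpansion (letters n ∪ Mset n) s / (s : ℝ≥0∞))
      atTop (nhds ⊤) := by
  rw [ENNReal.tendsto_nhds_top_iff_nat]
  intro N
  filter_upwards [eventually_ge_atTop (max 1296 ((46656 * (N + 1)) ^ 2))] with s hsall
  have hs : 1296 ≤ s := le_trans (le_max_left _ _) hsall
  have hsN : (46656 * (N + 1)) ^ 2 ≤ s := le_trans (le_max_right _ _) hsall
  have hspos : 0 < s := by omega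
  -- real estimate : (N+1) * s ≤ exp (√s / 12)
  have hsqrt : (46656 : ℝ) * (N + 1) ≤ Real.sqrt s := by
    have h1 : Real.sqrt (((46656 * (N + 1)) ^ 2 : ℕ) : ℝ) ≤ Real.sqrt s :=
      Real.sqrt_le_sqrt (by exact_mod_cast hsN)
    have h2 : Real.sqrt (((46656 * (N + 1)) ^ 2 : ℕ) : ℝ) = (46656 : ℝ) * (N + 1) := by
      push_cast
      rw [Real.sqrt_sq (by positivity)]
    linarith
  have hexp : ((N + 1 : ℕ) : ℝ) * s ≤ Real.exp (Real.sqrt s / 12) := by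
    have h1 := exp_cube (Real.sqrt s / 12) (by positivity)
    have heq : (Real.sqrt s / 12 / 3) ^ 3 = (Real.sqrt s) ^ 3 / 46656 := by ring
    rw [heq] at h1
    have hss : Real.sqrt s ^ 2 = (s : ℝ) := Real.sq_sqrt (by positivity)
    have htn : (0:ℝ) ≤ Real.sqrt s := Real.sqrt_nonneg _
    have h2 : ((N + 1 : ℕ) : ℝ) * s ≤ (Real.sqrt s) ^ 3 / 46656 := by
      have hmul : (46656 * ((N:ℝ) + 1)) * (Real.sqrt s)^2 ≤ Real.sqrt s * (Real.sqrt s)^2 :=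
        mul_le_mul_of_nonneg_right hsqrt (sq_nonneg _)
      have h3 : Real.sqrt s * (Real.sqrt s)^2 = (Real.sqrt s)^3 := by ring
      have h4 : (46656 * ((N:ℝ) + 1)) * (Real.sqrt s)^2 = 46656 * (((N:ℝ) + 1) * s) := by
        rw [mul_assoc, hss]
      push_cast
      linarith
    linarith
  have hnat : (N + 1) * s ≤ ⌈Real.exp (Real.sqrt s / 12)⌉₊ := by
    have hc := Nat.le_ceil (Real.exp (Real.sqrt s / 12))
    have : (((N + 1) * s : ℕ) : ℝ) ≤ ((⌈Real.exp (Real.sqrt s / 12)⌉₊ : ℕ) : ℝ) := by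
      push_cast
      push_cast at hexp
      linarith
    exact_mod_cast this
  have hEN : (((N : ℕ) + 1 : ℕ) : ℝ≥0∞) * (s : ℝ≥0∞) ≤ fexpansion (letters n ∪ Mset n) s := by
    calc (((N : ℕ) + 1 : ℕ) : ℝ≥0∞) * (s : ℝ≥0∞) = (((N + 1) * s : ℕ) : ℝ≥0∞) := by
          push_cast; ring
      _ ≤ ((⌈Real.exp (Real.sqrt s / 12)⌉₊ : ℕ) : ℝ≥0∞) := by exact_mod_cast hnat
      _ ≤ fexpansion (letters n ∪ Mset n) s := key hn hs
  have hdiv : (((N + 1 : ℕ)) : ℝ≥0∞) ≤ fexpansion (letters n ∪ Mset n) s / (s : ℝ≥0∞) :=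
    (ENNReal.le_div_iff_mul_le (Or.inl (by exact_mod_cast hspos.ne'))
      (Or.inl (ENNReal.natCast_ne_top s))).mpr hEN
  exact lt_of_lt_of_le (by exact_mod_cast Nat.lt_succ_self N) hdiv

end FreeExpAux

open Filter in
/-- **Probabilistic sparse macros give superlinear expansion in `F_n`.**
For the free monoid on `n ≥ 2` generators there is a macro set `M` whose sphere density
`|M ∩ S_r|/|S_r|` tends to `0`, yet for constants `K, c > 0` (depending only on `n`) one
has `B_G(r) ⊆ B_{G'}(⌈K(log r)^2⌉)` for all large `r`, hence
`f_{G'}(s) ≥ exp(c√s)` for all large `s` and `f_{G'}(s)/s → ∞`. -/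
theorem free_probabilistic_superlinear_expansion
    (n : ℕ) (hn : 2 ≤ n) :
    ∃ M : Set (List (Fin n)),
      (Tendsto (fun r : ℕ => ((M ∩ {w : List (Fin n) | w.length = r}).ncard : ℝ) / (n : ℝ) ^ r)
        atTop (nhds 0)) ∧
      (∃ K c : ℝ, 0 < K ∧ 0 < c ∧
        (∃ r₀ : ℕ, ∀ r : ℕ, r₀ ≤ r → ∀ w : List (Fin n), w.length ≤ r →
          flen (letters n ∪ M) w ≤ ((⌈K * (Real.log r) ^ 2⌉₊ : ℕ) : ℕ∞)) ∧
        (∃ s₀ : ℕ, ∀ s : ℕ, s₀ ≤ s →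
          ENNReal.ofReal (Real.exp (c * Real.sqrt s)) ≤ fexpansion (letters n ∪ M) s)) ∧
      (Tendsto (fun s : ℕ => fexpansion (letters n ∪ M) s / (s : ℝ≥0∞))
        atTop (nhds ⊤)) := by
  refine ⟨FreeExpAux.Mset n, FreeExpAux.density_tendsto hn,
    ⟨9, 1/12, by norm_num, by norm_num,
      ⟨2, fun r hr w hw => FreeExpAux.part2 hn hr w hw⟩,
      ⟨1296, fun s hs => FreeExpAux.part3 hn hs⟩⟩,
    FreeExpAux.part4 hn⟩
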